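/- Let μ : ℝ → ℝ be twice differentiable with μ'(x) > 0 for all x ∈ ℝ, μ'(x) ≤ L for all x, and |μ''(x)| ≤ M for all x, where L, M > 0. Then for any reals a ≤ b there exists a function h : ℝ → ℝ which is twice differentiable on ℝ and satisfies: (i) h(x) = μ(x) for all x ∈ [a, b]; (ii) h'(x) > 0 for all x ∈ ℝ (h is strictly increasing); (iii) h'(x) ≤ L and |h''(x)| ≤ M for all x ∈ ℝ; (iv) h(x) → +∞ as x → +∞; and (v) h(x) → −∞ as x → −∞. -/

import Mathlib

open Filter

/-- Soft clamp of `x` into `[a,b]` with arctan tails. -/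
noncomputable def stmt17P (a b : ℝ) (x : ℝ) : ℝ :=
  if x < a then a + Real.arctan (x - a) else if x ≤ b then x else b + Real.arctan (x - b)

/-- Derivative of the soft clamp. -/
noncomputable def stmt17P' (a b : ℝ) (x : ℝ) : ℝ :=
  if x < a then 1 / (1 + (x - a) ^ 2) else if x ≤ b then 1 else 1 / (1 + (x - b) ^ 2)

lemma stmt17g_hasDerivAt (c x : ℝ) :
    HasDerivAt (fun y => c + Real.arctan (y - c)) (1 / (1 + (x - c) ^ 2)) x := by
  have h1 : HasDerivAt (fun y : ℝ => y - c) 1 x := (hasDerivAt_id x).sub_const c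
  have h2 := (Real.hasDerivAt_arctan (x - c)).comp x h1
  have h3 := h2.const_add c
  simpa [Function.comp] using h3

lemma stmt17P_eq_on {a b : ℝ} {x : ℝ} (hx : x ∈ Set.Icc a b) :
    stmt17P a b x = x := by
  simp [stmt17P, not_lt.mpr hx.1, hx.2]

lemma stmt17P_hasDerivAt {a b : ℝ} (hab : a ≤ b) (x : ℝ) :
    HasDerivAt (stmt17P a b) (stmt17P' a b x) x := by
  rcases lt_trichotomy x a with hxa | hxa | hax
  · have hP' : stmt17P' a b x = 1 / (1 + (x - a) ^ 2) := if_pos hxa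
    rw [hP']
    refine (stmt17g_hasDerivAt a x).congr_of_eventuallyEq ?_
    filter_upwards [Iio_mem_nhds hxa] with y hy
    have hy' : y < a := hy
    simp [stmt17P, hy']
  · -- x = a
    rw [hxa]
    have hP' : stmt17P' a b a = 1 := by simp [stmt17P', hab]
    rw [hP']
    have hga : HasDerivAt (fun y => a + Real.arctan (y - a)) 1 a := by
      simpa using stmt17g_hasDerivAt a a
    have hleft : HasDerivWithinAt (stmt17P a b) 1 (Set.Iic a) a := by
      refine hga.hasDerivWithinAt.congr ?_ ?_
      · intro y hy
        have hy' : y ≤ a := hy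
        rcases lt_or_eq_of_le hy' with h | rfl
        · simp [stmt17P, h]
        · simp [stmt17P, hab]
      · simp [stmt17P, hab]
    rcases eq_or_lt_of_le hab with heq | hlt
    · -- a = b
      subst heq
      have hright : HasDerivWithinAt (stmt17P a a) 1 (Set.Ici a) a := by
        refine hga.hasDerivWithinAt.congr ?_ ?_
        · intro y hy
          have hy' : a ≤ y := hy
          rcases lt_or_eq_of_le hy' with h | rfl
          · simp [stmt17P, not_lt.mpr h.le, not_le.mpr h]
          · simp [stmt17P]
        · simp [stmt17P]
      have := hleft.union hright
      rw [Set.Iic_union_Ici] at this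
      exact hasDerivWithinAt_univ.mp this
    · have hright : HasDerivWithinAt (stmt17P a b) 1 (Set.Ici a) a := by
        refine (hasDerivAt_id a).hasDerivWithinAt.congr_of_eventuallyEq ?_ ?_
        · filter_upwards [mem_nhdsWithin_of_mem_nhds (Iio_mem_nhds hlt),
            self_mem_nhdsWithin] with y h1 h2
          have h1' : y < b := h1
          have h2' : a ≤ y := h2
          simp [stmt17P, not_lt.mpr h2', h1'.le]
        · simp [stmt17P, hab]
      have := hleft.union hright
      rw [Set.Iic_union_Ici] at this
      exact hasDerivWithinAt_univ.mp this
  · rcases lt_trichotomy x b with hxb | hxb | hbx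
    · -- a < x < b
      have hP' : stmt17P' a b x = 1 := by simp [stmt17P', not_lt.mpr hax.le, hxb.le]
      rw [hP']
      refine (hasDerivAt_id x).congr_of_eventuallyEq ?_
      filter_upwards [Ioo_mem_nhds hax hxb] with y hy
      simp [stmt17P, not_lt.mpr hy.1.le, hy.2.le]
    · -- x = b, a < b
      rw [hxb] at hax ⊢
      have hP' : stmt17P' a b b = 1 := by simp [stmt17P', not_lt.mpr hab]
      rw [hP']
      have hleft : HasDerivWithinAt (stmt17P a b) 1 (Set.Iic b) b := by
        refine (hasDerivAt_id b).hasDerivWithinAt.congr_of_eventuallyEq ?_ ?_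
        · filter_upwards [mem_nhdsWithin_of_mem_nhds (Ioi_mem_nhds hax),
            self_mem_nhdsWithin] with y h1 h2
          have h1' : a < y := h1
          have h2' : y ≤ b := h2
          simp [stmt17P, not_lt.mpr h1'.le, h2']
        · simp [stmt17P, not_lt.mpr hab]
      have hgb : HasDerivAt (fun y => b + Real.arctan (y - b)) 1 b := by
        simpa using stmt17g_hasDerivAt b b
      have hright : HasDerivWithinAt (stmt17P a b) 1 (Set.Ici b) b := by
        refine hgb.hasDerivWithinAt.congr ?_ ?_
        · intro y hy
          have hy' : b ≤ y := hy
          rcases lt_or_eq_of_le hy' with h | rfl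
          · simp [stmt17P, not_lt.mpr (hab.trans h.le), not_le.mpr h]
          · simp [stmt17P, not_lt.mpr hab]
        · simp [stmt17P, not_lt.mpr hab]
      have := hleft.union hright
      rw [Set.Iic_union_Ici] at this
      exact hasDerivWithinAt_univ.mp this
    · -- b < x
      have hP' : stmt17P' a b x = 1 / (1 + (x - b) ^ 2) := by
        simp [stmt17P', not_lt.mpr (hab.trans hbx.le), not_le.mpr hbx]
      rw [hP']
      refine (stmt17g_hasDerivAt b x).congr_of_eventuallyEq ?_
      filter_upwards [Ioi_mem_nhds hbx] with y hy
      simp [stmt17P, not_lt.mpr (hab.trans (le_of_lt hy)), not_le.mpr (show b < y from hy)]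

lemma stmt17P_mem {a b : ℝ} (hab : a ≤ b) (x : ℝ) :
    stmt17P a b x ∈ Set.Icc (a - 2) (b + 2) := by
  have harc : ∀ t : ℝ, -2 ≤ Real.arctan t ∧ Real.arctan t ≤ 2 := by
    intro t
    have h1 := Real.arctan_lt_pi_div_two t
    have h2 := Real.neg_pi_div_two_lt_arctan t
    have hpi : Real.pi ≤ 4 := Real.pi_le_four
    constructor <;> [linarith; linarith]
  unfold stmt17P
  split_ifs with h1 h2
  · obtain ⟨hl, hr⟩ := harc (x - a); exact ⟨by linarith, by linarith⟩
  · have := not_lt.mp h1; exact ⟨by linarith, by linarith⟩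
  · obtain ⟨hl, hr⟩ := harc (x - b); exact ⟨by linarith, by linarith⟩

lemma stmt17P'_bounds (a b : ℝ) (x : ℝ) :
    0 < stmt17P' a b x ∧ stmt17P' a b x ≤ 1 := by
  have key : ∀ t : ℝ, 0 < 1 / (1 + t ^ 2) ∧ 1 / (1 + t ^ 2) ≤ 1 := by
    intro t
    have h : (0:ℝ) < 1 + t ^ 2 := by positivity
    refine ⟨by positivity, ?_⟩
    rw [div_le_one h]
    nlinarith [sq_nonneg t]
  unfold stmt17P'
  split_ifs
  · exact key _
  · exact ⟨one_pos, le_refl 1⟩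
  · exact key _

/-- construction of the corrected link function. If μ is twice
differentiable with 0 < μ' ≤ L and |μ''| ≤ M everywhere, then for any a ≤ b there is a
twice differentiable h agreeing with μ on [a,b], strictly increasing with h' > 0,
satisfying the same derivative bounds, and tending to +∞ at +∞ and −∞ at −∞. -/
theorem stmt_17 (μ : ℝ → ℝ)
    (hd1 : ∀ x, DifferentiableAt ℝ μ x)
    (hd2 : ∀ x, DifferentiableAt ℝ (deriv μ) x)
    (L M : ℝ) (hL : 0 < L) (hM : 0 < M)
    (hpos : ∀ x, 0 < deriv μ x)
    (hLb : ∀ x, deriv μ x ≤ L)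
    (hMb : ∀ x, |deriv (deriv μ) x| ≤ M)
    (a b : ℝ) (hab : a ≤ b) :
    ∃ h : ℝ → ℝ,
      (∀ x, DifferentiableAt ℝ h x) ∧
      (∀ x, DifferentiableAt ℝ (deriv h) x) ∧
      (∀ x ∈ Set.Icc a b, h x = μ x) ∧
      (∀ x, 0 < deriv h x) ∧
      StrictMono h ∧
      (∀ x, deriv h x ≤ L) ∧
      (∀ x, |deriv (deriv h) x| ≤ M) ∧
      Tendsto h atTop atTop ∧
      Tendsto h atBot atBot := by
  set f : ℝ → ℝ := fun x => deriv μ (stmt17P a b x) with hfdef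
  have hfD : ∀ x, HasDerivAt f
      (deriv (deriv μ) (stmt17P a b x) * stmt17P' a b x) x := fun x =>
    ((hd2 _).hasDerivAt).comp x (stmt17P_hasDerivAt hab x)
  have hfcont : Continuous f :=
    continuous_iff_continuousAt.mpr fun x => (hfD x).differentiableAt.continuousAt
  have hfint : ∀ u v : ℝ, IntervalIntegrable f MeasureTheory.volume u v :=
    fun u v => hfcont.intervalIntegrable u v
  have hDcont : Continuous (deriv μ) :=
    continuous_iff_continuousAt.mpr fun x => (hd2 x).continuousAt
  set h : ℝ → ℝ := fun x => μ a + ∫ t in a..x, f t with hhdef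
  have hhd : ∀ x, HasDerivAt h (f x) x := by
    intro x
    have := intervalIntegral.integral_hasDerivAt_right (hfint a x)
      (hfcont.stronglyMeasurableAtFilter _ _) hfcont.continuousAt
    exact this.const_add (μ a)
  have hderiv : deriv h = f := funext fun x => (hhd x).deriv
  -- positive lower bound for f
  obtain ⟨z, hz, hzmin⟩ := (isCompact_Icc (a := a - 2) (b := b + 2)).exists_isMinOn
    ⟨a, by constructor <;> linarith⟩ hDcont.continuousOn
  set ε := deriv μ z with hεdef
  have hε : 0 < ε := hpos z
  have hεf : ∀ x, ε ≤ f x := fun x => hzmin (stmt17P_mem hab x)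
  have hfpos : ∀ x, 0 < f x := fun x => hpos _
  -- agreement on [a,b]
  have hagree : ∀ x ∈ Set.Icc a b, h x = μ x := by
    intro x hx
    have h1 : ∫ t in a..x, f t = ∫ t in a..x, deriv μ t := by
      apply intervalIntegral.integral_congr
      intro y hy
      have hy' : y ∈ Set.Icc a b := by
        rw [Set.uIcc_of_le hx.1] at hy
        exact ⟨hy.1, hy.2.trans hx.2⟩
      simp [hfdef, stmt17P_eq_on hy']
    have h2 : ∫ t in a..x, deriv μ t = μ x - μ a := by
      apply intervalIntegral.integral_deriv_eq_sub (fun y _ => hd1 y)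
      exact hDcont.intervalIntegrable a x
    simp only [hhdef, h1, h2]
    ring
  have hderivpos : ∀ x, 0 < deriv h x := by
    intro x; rw [hderiv]; exact hfpos x
  refine ⟨h, fun x => (hhd x).differentiableAt, ?_, hagree, hderivpos,
    strictMono_of_deriv_pos hderivpos, ?_, ?_, ?_, ?_⟩
  · intro x; rw [hderiv]; exact (hfD x).differentiableAt
  · intro x; rw [hderiv]; exact hLb _
  · intro x
    rw [hderiv, (hfD x).deriv, abs_mul]
    obtain ⟨hp1, hp2⟩ := stmt17P'_bounds a b x
    calc |deriv (deriv μ) (stmt17P a b x)| * |stmt17P' a b x|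
        ≤ M * 1 := by
          apply mul_le_mul (hMb _) _ (abs_nonneg _) hM.le
          rw [abs_of_pos hp1]; exact hp2
      _ = M := mul_one M
  · -- atTop
    have hlin : Tendsto (fun x : ℝ => μ a + ε * (x - a)) atTop atTop := by
      apply tendsto_atTop_add_const_left
      exact (tendsto_atTop_add_const_right _ (-a) tendsto_id).const_mul_atTop hε
    refine tendsto_atTop_mono' atTop ?_ hlin
    filter_upwards [eventually_ge_atTop a] with x hx
    have hmono := intervalIntegral.integral_mono_on hx
      (intervalIntegrable_const (c := ε)) (hfint a x) (fun y _ => hεf y)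
    rw [intervalIntegral.integral_const, smul_eq_mul] at hmono
    simp only [hhdef]
    nlinarith
  · -- atBot
    have hlin : Tendsto (fun x : ℝ => μ a + ε * (x - a)) atBot atBot := by
      apply tendsto_atBot_add_const_left
      exact (tendsto_atBot_add_const_right _ (-a) tendsto_id).const_mul_atBot hε
    refine tendsto_atBot_mono' atBot ?_ hlin
    filter_upwards [eventually_le_atBot a] with x hx
    have hmono := intervalIntegral.integral_mono_on hx
      (intervalIntegrable_const (c := ε)) (hfint x a) (fun y _ => hεf y)
    rw [intervalIntegral.integral_const, smul_eq_mul] at hmono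
    have hsym : ∫ t in a..x, f t = -∫ t in x..a, f t :=
      intervalIntegral.integral_symm x a
    simp only [hhdef, hsym]
    nlinarith
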